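/- The state ω_ll (full integration on platform m) maximizes the potential over the four group-symmetric states {ω_ll, ω_lm, ω_ml, ω_mm} — i.e. is stochastically stable — if and only if γ_A ≥ (N^B/(N^A − 1))·δ + 1/2 and γ_B ≥ (N^A/(N^B − 1))·δ + 1/2. -/
import Mathlib


/-- C(n, 2) = n(n−1)/2, extended to real arguments. -/
noncomputable def C2 (n : ℝ) : ℝ := n * (n - 1) / 2

/-- Potential at the integrated state ω_ll (everyone on m). -/
noncomputable def potLL (NA NB γA γB : ℝ) : ℝ := C2 NA * γA + C2 NB * γB

/-- Potential at the segregated state ω_lm (Group A on m, Group B on ℓ). -/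
noncomputable def potLM (NA NB γA γB δ : ℝ) : ℝ :=
  C2 NA * γA + NA * NB * δ + C2 NB * (1 - γB)

/-- Potential at the segregated state ω_ml (Group A on ℓ, Group B on m). -/
noncomputable def potML (NA NB γA γB δ : ℝ) : ℝ :=
  C2 NA * (1 - γA) + NA * NB * δ + C2 NB * γB

/-- Potential at the integrated state ω_mm (everyone on ℓ). -/
noncomputable def potMM (NA NB γA γB : ℝ) : ℝ := C2 NA * (1 - γA) + C2 NB * (1 - γB)

/-- The integrated state ω_ll is stochastically stable (maximizes the potential
over the four group-symmetric states) if and only if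
γ_A ≥ (N^B/(N^A − 1))·δ + 1/2 and γ_B ≥ (N^A/(N^B − 1))·δ + 1/2. -/
theorem omega_ll_stochastically_stable_iff
    (NA NB : ℕ) (hNA : 2 ≤ NA) (hNB : 2 ≤ NB)
    (γA γB δ : ℝ) (hγA : γA ∈ Set.Ioo (1/2 : ℝ) 1) (hγB : γB ∈ Set.Ioo (1/2 : ℝ) 1)
    (hδ : 0 < δ) :
    (potLL NA NB γA γB ≥ potLM NA NB γA γB δ ∧
      potLL NA NB γA γB ≥ potML NA NB γA γB δ ∧
      potLL NA NB γA γB ≥ potMM NA NB γA γB) ↔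
    (γA ≥ ((NB : ℝ) / ((NA : ℝ) - 1)) * δ + 1/2 ∧
      γB ≥ ((NA : ℝ) / ((NB : ℝ) - 1)) * δ + 1/2) := by
  obtain ⟨hA0, hA1⟩ := hγA
  obtain ⟨hB0, hB1⟩ := hγB
  have ha : (2:ℝ) ≤ (NA:ℝ) := by exact_mod_cast hNA
  have hb : (2:ℝ) ≤ (NB:ℝ) := by exact_mod_cast hNB
  have ha1 : (0:ℝ) < (NA:ℝ) - 1 := by linarith
  have hb1 : (0:ℝ) < (NB:ℝ) - 1 := by linarith
  have hiffA : (γA ≥ ((NB : ℝ) / ((NA : ℝ) - 1)) * δ + 1/2) ↔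
      (NB:ℝ) * δ ≤ (γA - 1/2) * ((NA:ℝ) - 1) := by
    rw [ge_iff_le, div_mul_eq_mul_div, ← le_sub_iff_add_le, div_le_iff₀ ha1]
  have hiffB : (γB ≥ ((NA : ℝ) / ((NB : ℝ) - 1)) * δ + 1/2) ↔
      (NA:ℝ) * δ ≤ (γB - 1/2) * ((NB:ℝ) - 1) := by
    rw [ge_iff_le, div_mul_eq_mul_div, ← le_sub_iff_add_le, div_le_iff₀ hb1]
  rw [hiffA, hiffB]
  unfold potLL potLM potML potMM C2
  constructor
  · rintro ⟨h1, h2, h3⟩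
    constructor
    · nlinarith [mul_pos (show (0:ℝ) < (NA:ℝ) by linarith) hδ]
    · nlinarith [mul_pos (show (0:ℝ) < (NB:ℝ) by linarith) hδ]
  · rintro ⟨h1, h2⟩
    have hA' : (NA:ℝ) * ((NB:ℝ) * δ) ≤ (NA:ℝ) * ((γA - 1/2) * ((NA:ℝ) - 1)) :=
      mul_le_mul_of_nonneg_left h1 (by linarith)
    have hB' : (NB:ℝ) * ((NA:ℝ) * δ) ≤ (NB:ℝ) * ((γB - 1/2) * ((NB:ℝ) - 1)) :=
      mul_le_mul_of_nonneg_left h2 (by linarith)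
    refine ⟨by nlinarith, by nlinarith, by nlinarith [mul_pos (mul_pos (show (0:ℝ)<(NA:ℝ) by linarith) ha1) hδ, mul_pos (mul_pos (show (0:ℝ)<(NB:ℝ) by linarith) hb1) hδ]⟩
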